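/- Let A be a real n×d matrix with rows a_1,…,a_n, let γ ∈ (0,1) and i ∈ {1,…,n}, and let W be the n×n diagonal matrix with W_{ii} = √(1−γ) and W_{jj} = 1 for all j ≠ i. Then τ_i(WA)·(1 − γ·τ_i(A)) = (1−γ)·τ_i(A), i.e. τ_i(WA) = (1−γ)τ_i(A)/(1−γτ_i(A)), and consequently τ_i(WA) ≤ τ_i(A). (Note γτ_i(A) < 1 since τ_i(A) ≤ 1 and γ < 1.) -/

import Mathlib

open Matrix

/-- The leverage score of row `i` of `M`:
`τᵢ(M) = inf {‖x‖₂² : Mᵀx = mᵢ}` (the set is nonempty since `x = eᵢ` works). -/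
noncomputable def lev {n d : ℕ} (M : Matrix (Fin n) (Fin d) ℝ) (i : Fin n) : ℝ :=
  sInf {t : ℝ | ∃ x : Fin n → ℝ, Mᵀ *ᵥ x = M i ∧ t = ∑ j, (x j) ^ 2}

section aux

variable {n d : ℕ}

private lemma lev_bddBelow (M : Matrix (Fin n) (Fin d) ℝ) (i : Fin n) :
    BddBelow {t : ℝ | ∃ x : Fin n → ℝ, Mᵀ *ᵥ x = M i ∧ t = ∑ j, (x j) ^ 2} := by
  refine ⟨0, ?_⟩
  rintro t ⟨x, -, rfl⟩
  positivity

private lemma single_feasible (M : Matrix (Fin n) (Fin d) ℝ) (i : Fin n) :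
    Mᵀ *ᵥ (Pi.single i 1 : Fin n → ℝ) = M i := by
  rw [Matrix.mulVec_single_one]
  simp
  rfl

private lemma lev_nonempty (M : Matrix (Fin n) (Fin d) ℝ) (i : Fin n) :
    Set.Nonempty {t : ℝ | ∃ x : Fin n → ℝ, Mᵀ *ᵥ x = M i ∧ t = ∑ j, (x j) ^ 2} :=
  ⟨_, Pi.single i 1, single_feasible M i, rfl⟩

/-- Existence of the minimal-norm solution, with the relevant properties. -/
private lemma exists_min (M : Matrix (Fin n) (Fin d) ℝ) (i : Fin n) :
    ∃ u p : Fin n → ℝ, Mᵀ *ᵥ u = M i ∧ Mᵀ *ᵥ p = 0 ∧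
      (∀ z : Fin n → ℝ, Mᵀ *ᵥ z = 0 → ∑ j, u j * z j = 0) ∧
      (u + p = Pi.single i 1) ∧
      lev M i = ∑ j, u j ^ 2 := by
  classical
  set K : Submodule ℝ (EuclideanSpace ℝ (Fin n)) :=
    LinearMap.ker ((Mᵀ).mulVecLin ∘ₗ (WithLp.linearEquiv 2 ℝ (Fin n → ℝ)).toLinearMap) with hK
  have hker : ∀ x : EuclideanSpace ℝ (Fin n),
      x ∈ K ↔ Mᵀ *ᵥ (WithLp.equiv 2 (Fin n → ℝ) x) = 0 := fun _ => Iff.rfl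
  set ei : EuclideanSpace ℝ (Fin n) := (WithLp.equiv 2 (Fin n → ℝ)).symm (Pi.single i 1) with hei
  set u' : EuclideanSpace ℝ (Fin n) := (Submodule.orthogonalProjectionOnto Kᗮ ei : EuclideanSpace ℝ (Fin n))
    with hu'
  have hu : u' ∈ Kᗮ := (Submodule.orthogonalProjectionOnto Kᗮ ei).2
  have hpK : ei - u' ∈ K := by
    have := Submodule.sub_starProjection_mem_orthogonal (K := Kᗮ) ei
    rwa [Submodule.orthogonal_orthogonal] at this
  have hsum : ∀ x y : EuclideanSpace ℝ (Fin n), inner ℝ x y = ∑ j, x j * y j := by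
    intro x y
    simp [PiLp.inner_apply, RCLike.inner_apply, mul_comm]
  set u : Fin n → ℝ := WithLp.equiv 2 (Fin n → ℝ) u' with hu_def
  set p : Fin n → ℝ := Pi.single i 1 - u with hp_def
  have happ : ∀ (x : EuclideanSpace ℝ (Fin n)) (j : Fin n),
      (WithLp.equiv 2 (Fin n → ℝ) x) j = x j := fun _ _ => rfl
  have hMp : Mᵀ *ᵥ p = 0 := by
    have := (hker _).1 hpK
    have heq : (WithLp.equiv 2 (Fin n → ℝ)) (ei - u') = p := by
      funext j
      show ei j - u' j = (Pi.single i 1 : Fin n → ℝ) j - u j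
      rfl
    rwa [heq] at this
  have hMu : Mᵀ *ᵥ u = M i := by
    have h1 : u = Pi.single i 1 - p := by simp [hp_def]
    rw [h1, Matrix.mulVec_sub, hMp, single_feasible, sub_zero]
  have horth : ∀ z : Fin n → ℝ, Mᵀ *ᵥ z = 0 → ∑ j, u j * z j = 0 := by
    intro z hz
    have hzK : (WithLp.equiv 2 (Fin n → ℝ)).symm z ∈ K := by
      rw [hker]
      simpa using hz
    have h0 : inner ℝ ((WithLp.equiv 2 (Fin n → ℝ)).symm z) u' = (0 : ℝ) := hu _ hzK
    rw [hsum] at h0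
    rw [← h0]
    exact Finset.sum_congr rfl fun j _ => mul_comm _ _
  refine ⟨u, p, hMu, hMp, horth, by simp [hp_def], ?_⟩
  apply le_antisymm
  · exact csInf_le (lev_bddBelow M i) ⟨u, hMu, rfl⟩
  · refine le_csInf (lev_nonempty M i) ?_
    rintro t ⟨x, hx, rfl⟩
    set z : Fin n → ℝ := x - u with hz_def
    have hz : Mᵀ *ᵥ z = 0 := by
      rw [hz_def, Matrix.mulVec_sub, hx, hMu, sub_self]
    have huz := horth z hz
    have hxj : ∀ j, x j = u j + z j := by intro j; simp [hz_def]
    calc ∑ j, u j ^ 2 ≤ ∑ j, u j ^ 2 + (2 * ∑ j, u j * z j + ∑ j, z j ^ 2) := by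
          rw [huz]
          have : (0:ℝ) ≤ ∑ j, z j ^ 2 := by positivity
          linarith
      _ = ∑ j, (x j) ^ 2 := by
          rw [Finset.mul_sum, ← Finset.sum_add_distrib, ← Finset.sum_add_distrib]
          exact Finset.sum_congr rfl fun j _ => by rw [hxj j]; ring

end aux

set_option maxHeartbeats 1600000 in
/-- rank-one update, reweighted row: if `W` is diagonal with
`Wᵢᵢ = √(1−γ)` and `Wⱼⱼ = 1` for `j ≠ i`, then
`τᵢ(WA)·(1 − γτᵢ(A)) = (1−γ)·τᵢ(A)`, i.e. `τᵢ(WA) = (1−γ)τᵢ(A)/(1−γτᵢ(A))`,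
and consequently `τᵢ(WA) ≤ τᵢ(A)`. -/
theorem stmt10 {n d : ℕ} (A : Matrix (Fin n) (Fin d) ℝ) (γ : ℝ)
    (hγ0 : 0 < γ) (hγ1 : γ < 1) (i : Fin n)
    (w : Fin n → ℝ) (hwi : w i = Real.sqrt (1 - γ)) (hwj : ∀ j ≠ i, w j = 1) :
    lev (Matrix.diagonal w * A) i * (1 - γ * lev A i) = (1 - γ) * lev A i ∧
    lev (Matrix.diagonal w * A) i ≤ lev A i := by
  classical
  obtain ⟨u, p, hMu, hMp, horth, hup, hlev⟩ := exists_min A i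
  set τ : ℝ := ∑ j, u j ^ 2 with hτ_def
  set σ : ℝ := 1 - γ with hσ_def
  have hσ0 : 0 < σ := by simp [hσ_def]; linarith
  have hs : Real.sqrt σ ^ 2 = σ := Real.sq_sqrt hσ0.le
  have hs0 : 0 < Real.sqrt σ := Real.sqrt_pos.2 hσ0
  -- basic facts about u, p, τ
  have hupj : ∀ j, u j + p j = (Pi.single i 1 : Fin n → ℝ) j := fun j => by
    have h := congrFun hup j; exact h
  have huporth : ∑ j, u j * p j = 0 := horth p hMp
  have hui : u i = τ := by
    have h1 : ∑ j, u j * (Pi.single i 1 : Fin n → ℝ) j = u i := by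
      simp [Pi.single_apply, mul_ite, Finset.sum_ite_eq']
    rw [← h1]
    rw [show ∑ j, u j * (Pi.single i 1 : Fin n → ℝ) j = ∑ j, (u j ^ 2 + u j * p j) from
      Finset.sum_congr rfl fun j _ => by rw [← hupj j]; ring]
    rw [Finset.sum_add_distrib, huporth, add_zero, hτ_def]
  have hpsum : ∑ j, p j ^ 2 = p i := by
    have h1 : ∑ j, p j * (Pi.single i 1 : Fin n → ℝ) j = p i := by
      simp [Pi.single_apply, mul_ite, Finset.sum_ite_eq']
    rw [← h1]
    rw [show ∑ j, p j * (Pi.single i 1 : Fin n → ℝ) j = ∑ j, (u j * p j + p j ^ 2) from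
      Finset.sum_congr rfl fun j _ => by rw [← hupj j]; ring]
    rw [Finset.sum_add_distrib, huporth, zero_add]
  have hpi : p i = 1 - τ := by
    have := hupj i
    simp [Pi.single_apply] at this
    linarith [hui]
  have hτ0 : 0 ≤ τ := by positivity
  have hτ1 : τ ≤ 1 := by
    have : (0:ℝ) ≤ ∑ j, p j ^ 2 := by positivity
    rw [hpsum, hpi] at this
    linarith
  set δ : ℝ := 1 - γ * τ with hδ_def
  have hδ0 : 0 < δ := by
    have : γ * τ ≤ γ := by nlinarith
    simp only [hδ_def]; linarith
  set B : Matrix (Fin n) (Fin d) ℝ := Matrix.diagonal w * A with hB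
  have hBi : B i = fun j => Real.sqrt σ * A i j := by
    funext j
    rw [hB]
    show (Matrix.diagonal w * A) i j = _
    rw [Matrix.diagonal_mul, hwi, hσ_def]
  have hBT : ∀ x : Fin n → ℝ, Bᵀ *ᵥ x = Aᵀ *ᵥ (fun j => w j * x j) := by
    intro x
    have hd : Matrix.diagonal w *ᵥ x = fun j => w j * x j :=
      funext fun j => Matrix.mulVec_diagonal w x j
    rw [hB, Matrix.transpose_mul, Matrix.diagonal_transpose, ← Matrix.mulVec_mulVec, hd]
  -- value
  set v : ℝ := σ * τ / δ with hv_def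
  -- Upper bound: explicit witness
  have hub : lev B i ≤ v := by
    set s : ℝ := -(γ * τ) / δ with hs_def
    set y : Fin n → ℝ := fun j => u j + s * p j with hy_def
    set x : Fin n → ℝ := fun j => if j = i then y i else Real.sqrt σ * y j with hx_def
    have hwx : (fun j => w j * x j) = fun j => Real.sqrt σ * y j := by
      funext j
      by_cases hj : j = i
      · subst hj; simp [hx_def, hwi, hσ_def]
      · simp [hx_def, hj, hwj j hj]
    have hAy : Aᵀ *ᵥ y = A i := by
      have : y = u + s • p := by funext j; simp [hy_def]
      rw [this, Matrix.mulVec_add, Matrix.mulVec_smul, hMu, hMp, smul_zero, add_zero]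
    have hfeas : Bᵀ *ᵥ x = B i := by
      rw [hBT, hwx, hBi]
      have : (fun j => Real.sqrt σ * y j) = Real.sqrt σ • y := rfl
      rw [this, Matrix.mulVec_smul, hAy]
      rfl
    have hysum : ∑ j, y j ^ 2 = τ + s ^ 2 * (1 - τ) := by
      rw [show ∑ j, y j ^ 2 = ∑ j, (u j ^ 2 + (2 * s) * (u j * p j) + s ^ 2 * p j ^ 2) from
        Finset.sum_congr rfl fun j _ => by simp only [hy_def]; ring]
      rw [Finset.sum_add_distrib, Finset.sum_add_distrib, ← Finset.mul_sum, ← Finset.mul_sum,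
        huporth, mul_zero, add_zero, hpsum, hpi, hτ_def]
    have hyi : y i = τ + s * (1 - τ) := by simp [hy_def, hui, hpi]
    have hxval : ∑ j, x j ^ 2 = σ * (∑ j, y j ^ 2) + γ * y i ^ 2 := by
      rw [show ∑ j, x j ^ 2 = ∑ j, (σ * y j ^ 2 + if j = i then γ * y i ^ 2 else 0) from
        Finset.sum_congr rfl fun j _ => by
          by_cases hj : j = i
          · subst hj; simp [hx_def, hσ_def]; ring
          · simp [hx_def, hj]; rw [mul_pow, hs]]
      rw [Finset.sum_add_distrib, ← Finset.mul_sum, Finset.sum_ite_eq' Finset.univ i]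
      simp
    have hval : ∑ j, x j ^ 2 = v := by
      rw [hxval, hysum, hyi, hv_def, hs_def]
      field_simp
      ring
    calc lev B i ≤ ∑ j, x j ^ 2 := csInf_le (lev_bddBelow B i) ⟨x, hfeas, rfl⟩
      _ = v := hval
  -- Lower bound
  have hlb : v ≤ lev B i := by
    refine le_csInf (lev_nonempty B i) ?_
    rintro t ⟨x, hx, rfl⟩
    set y : Fin n → ℝ := fun j => if j = i then x i else x j / Real.sqrt σ with hy_def
    have hxy : ∀ j, j ≠ i → x j = Real.sqrt σ * y j := by
      intro j hj
      simp [hy_def, hj]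
      field_simp
    have hwx : (fun j => w j * x j) = fun j => Real.sqrt σ * y j := by
      funext j
      by_cases hj : j = i
      · subst hj; simp [hy_def, hwi, hσ_def]
      · rw [hwj j hj, one_mul, hxy j hj]
    have hAy : Aᵀ *ᵥ y = A i := by
      have h1 : Real.sqrt σ • (Aᵀ *ᵥ y) = Real.sqrt σ • (A i) := by
        rw [← Matrix.mulVec_smul]
        have h2 : Real.sqrt σ • y = fun j => w j * x j := by rw [hwx]; rfl
        rw [h2, ← hBT, hx, hBi]
        rfl
      funext j
      have h3 := congrFun h1 j
      simp only [Pi.smul_apply, smul_eq_mul] at h3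
      exact mul_left_cancel₀ (ne_of_gt hs0) h3
    -- decompose
    set z : Fin n → ℝ := fun j => y j - u j with hz_def
    have hz : Aᵀ *ᵥ z = 0 := by
      have : z = y - u := by funext j; simp [hz_def]
      rw [this, Matrix.mulVec_sub, hAy, hMu, sub_self]
    have huz : ∑ j, u j * z j = 0 := horth z hz
    set q : ℝ := ∑ j, z j ^ 2 with hq_def
    set c : ℝ := ∑ j, p j * z j with hc_def
    have hq0 : 0 ≤ q := by positivity
    have hcs : c ^ 2 ≤ (1 - τ) * q := by
      have := Finset.sum_mul_sq_le_sq_mul_sq Finset.univ p z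
      rw [hpsum, hpi] at this
      exact this
    have hysum : ∑ j, y j ^ 2 = τ + q := by
      rw [show ∑ j, y j ^ 2 = ∑ j, (u j ^ 2 + 2 * (u j * z j) + z j ^ 2) from
        Finset.sum_congr rfl fun j _ => by
          have : y j = u j + z j := by simp [hz_def]
          rw [this]; ring]
      rw [Finset.sum_add_distrib, Finset.sum_add_distrib, ← Finset.mul_sum, huz]
      simp [hτ_def, hq_def]
    have hzi : z i = c := by
      have h1 : ∑ j, z j * (Pi.single i 1 : Fin n → ℝ) j = z i := by
        simp [Pi.single_apply, mul_ite, Finset.sum_ite_eq']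
      rw [← h1]
      rw [show ∑ j, z j * (Pi.single i 1 : Fin n → ℝ) j = ∑ j, (u j * z j + p j * z j) from
        Finset.sum_congr rfl fun j _ => by rw [← hupj j]; ring]
      rw [Finset.sum_add_distrib, huz, zero_add, hc_def]
    have hyi : y i = τ + c := by
      have : y i = u i + z i := by simp [hz_def]
      rw [this, hui, hzi]
    have hxval : ∑ j, x j ^ 2 = σ * (∑ j, y j ^ 2) + γ * y i ^ 2 := by
      rw [show ∑ j, x j ^ 2 = ∑ j, (σ * y j ^ 2 + if j = i then γ * y i ^ 2 else 0) from
        Finset.sum_congr rfl fun j _ => by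
          by_cases hj : j = i
          · subst hj
            have : y j = x j := by simp [hy_def]
            rw [this]
            simp [hσ_def]; ring
          · rw [hxy j hj, mul_pow, hs]; simp [hj]]
      rw [Finset.sum_add_distrib, ← Finset.mul_sum, Finset.sum_ite_eq' Finset.univ i]
      simp
    rw [hxval, hysum, hyi, hv_def]
    -- key inequality: σ*(τ+q) + γ*(τ+c)^2 ≥ σ*τ/δ
    rw [div_le_iff₀ hδ0]
    by_cases hτe : τ = 1
    · have hc0 : c = 0 := by
        have : c ^ 2 ≤ 0 := by rw [hτe] at hcs; simpa using hcs
        nlinarith [sq_nonneg c]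
      rw [hτe, hc0, hδ_def, hτe, hσ_def]
      nlinarith [mul_nonneg (mul_nonneg (by linarith : (0:ℝ) ≤ 1 - γ)
        (by linarith : (0:ℝ) ≤ 1 - γ)) hq0]
    · have h1τ : 0 < 1 - τ := lt_of_le_of_ne (by linarith) (fun h => hτe (by linarith))
      have hqc : c ^ 2 / (1 - τ) ≤ q := by
        rw [div_le_iff₀ h1τ]
        nlinarith
      have key : σ * τ ≤ (σ * (τ + c ^ 2 / (1 - τ)) + γ * (τ + c) ^ 2) * δ := by
        have hid : (σ * (τ + c ^ 2 / (1 - τ)) + γ * (τ + c) ^ 2) * δ - σ * τ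
            = (δ ^ 2 / (1 - τ)) * (c + γ * τ * (1 - τ) / δ) ^ 2 := by
          have hδne : (1 - γ * τ) ≠ 0 := hδ0.ne'
          have h1τne : 1 - τ ≠ 0 := h1τ.ne'
          rw [hδ_def, hσ_def]
          field_simp
          ring
        nlinarith [mul_nonneg (div_nonneg (sq_nonneg δ) h1τ.le) (sq_nonneg (c + γ * τ * (1 - τ) / δ))]
      calc σ * τ ≤ (σ * (τ + c ^ 2 / (1 - τ)) + γ * (τ + c) ^ 2) * δ := key
        _ ≤ (σ * (τ + q) + γ * (τ + c) ^ 2) * δ := by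
            have : σ * (τ + c ^ 2 / (1 - τ)) ≤ σ * (τ + q) := by
              apply mul_le_mul_of_nonneg_left _ hσ0.le
              linarith
            nlinarith
  -- conclude
  have hlevB : lev B i = v := le_antisymm hub hlb
  constructor
  · rw [hlevB, hlev, hv_def]
    exact div_mul_cancel₀ _ hδ0.ne'
  · rw [hlevB, hlev, hv_def]
    rw [div_le_iff₀ hδ0]
    have h4 : 0 ≤ τ * (δ - σ) := by
      rw [show δ - σ = γ * (1 - τ) by rw [hδ_def, hσ_def]; ring]
      exact mul_nonneg hτ0 (mul_nonneg hγ0.le (by linarith))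
    nlinarith [h4]
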